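/- Let A be an m×n matrix over a field in the class M_{r,c}, with r = {r_1,...,r_t} and c = {c_1,...,c_t}. Define the m×t matrix L by l_{ij} = 0 for i < r_j and l_{ij} = [r_1,...,r_{j-1},i | c_1,...,c_j]_A / [r_1,...,r_j | c_1,...,c_j]_A for i ≥ r_j, and define the t×n matrix U by u_{ij} = 0 for j < c_i and u_{ij} = [r_1,...,r_i | c_1,...,c_{i-1},j]_A / [r_1,...,r_{i-1} | c_1,...,c_{i-1}]_A for j ≥ c_i. Then L ∈ L_r^* , U ∈ U_c, and A = LU. -/

import Mathlib

open Matrix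

/-- A real matrix is totally nonnegative if every minor is nonnegative. -/
def TotNonneg {m n : ℕ} (A : Matrix (Fin m) (Fin n) ℝ) : Prop :=
  ∀ (s : ℕ) (f : Fin s → Fin m) (g : Fin s → Fin n),
    StrictMono f → StrictMono g → 0 ≤ (A.submatrix f g).det

/-- The class `M_{r,c}`. -/
def InM {F : Type} [Field F] {m n t : ℕ} (A : Matrix (Fin m) (Fin n) F)
    (r : Fin t → Fin m) (c : Fin t → Fin n) : Prop :=
  A.rank = t ∧
  (∀ (s : ℕ) (hs : s ≤ t),
    (A.submatrix (fun k => r (Fin.castLE hs k)) (fun k => c (Fin.castLE hs k))).det ≠ 0) ∧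
  (∀ (s : ℕ) (hs : s ≤ t) (f : Fin s → Fin m) (g : Fin s → Fin n),
    StrictMono f → StrictMono g →
    (¬ (∀ k, r (Fin.castLE hs k) ≤ f k) ∨ ¬ (∀ k, c (Fin.castLE hs k) ≤ g k)) →
    (A.submatrix f g).det = 0)

/-- The class `L_r`. -/
def InL {F : Type} [Field F] {m t : ℕ} (L : Matrix (Fin m) (Fin t) F)
    (r : Fin t → Fin m) : Prop :=
  ∀ j, L (r j) j ≠ 0 ∧ ∀ i, i < r j → L i j = 0

/-- The class `L_r^*`. -/
def InLstar {F : Type} [Field F] {m t : ℕ} (L : Matrix (Fin m) (Fin t) F)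
    (r : Fin t → Fin m) : Prop :=
  ∀ j, L (r j) j = 1 ∧ ∀ i, i < r j → L i j = 0

/-- The class `U_c`. -/
def InU {F : Type} [Field F] {t n : ℕ} (U : Matrix (Fin t) (Fin n) F)
    (c : Fin t → Fin n) : Prop :=
  ∀ i, U i (c i) ≠ 0 ∧ ∀ j, j < c i → U i j = 0

/-- The explicit L factor of Theorem 1.4. -/
noncomputable def expL {F : Type} [Field F] {m n t : ℕ} (A : Matrix (Fin m) (Fin n) F)
    (r : Fin t → Fin m) (c : Fin t → Fin n) : Matrix (Fin m) (Fin t) F :=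
  fun i j =>
    if r j ≤ i then
      (A.submatrix (Fin.snoc (fun k : Fin j.val => r (Fin.castLE j.isLt.le k)) i)
          (fun k : Fin (j.val + 1) => c (Fin.castLE j.isLt k))).det /
      (A.submatrix (fun k : Fin (j.val + 1) => r (Fin.castLE j.isLt k))
          (fun k : Fin (j.val + 1) => c (Fin.castLE j.isLt k))).det
    else 0

/-- The explicit U factor of Theorem 1.4. -/
noncomputable def expU {F : Type} [Field F] {m n t : ℕ} (A : Matrix (Fin m) (Fin n) F)
    (r : Fin t → Fin m) (c : Fin t → Fin n) : Matrix (Fin t) (Fin n) F :=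
  fun i j =>
    if c i ≤ j then
      (A.submatrix (fun k : Fin (i.val + 1) => r (Fin.castLE i.isLt k))
          (Fin.snoc (fun k : Fin i.val => c (Fin.castLE i.isLt.le k)) j)).det /
      (A.submatrix (fun k : Fin i.val => r (Fin.castLE i.isLt.le k))
          (fun k : Fin i.val => c (Fin.castLE i.isLt.le k))).det
    else 0

lemma snoc_full {α : Type*} {t : ℕ} (f : Fin t → α) (j : Fin t) :
    Fin.snoc (fun k : Fin j.val => f (Fin.castLE j.isLt.le k)) (f j)
      = fun k : Fin (j.val + 1) => f (Fin.castLE j.isLt k) := by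
  funext k
  refine Fin.lastCases ?_ ?_ k
  · simp only [Fin.snoc_last]
    congr 1
  · intro k
    simp [Fin.snoc_castSucc]

lemma strictMono_snoc {k : ℕ} {α : Type*} [Preorder α] (f : Fin k → α) (x : α)
    (hf : StrictMono f) (hx : ∀ s, f s < x) : StrictMono (Fin.snoc f x) := by
  intro a b hab
  induction b using Fin.lastCases with
  | last =>
    induction a using Fin.lastCases with
    | last => exact absurd hab (lt_irrefl _)
    | cast a => rw [Fin.snoc_castSucc, Fin.snoc_last]; exact hx a
  | cast b =>
    induction a using Fin.lastCases with
    | last => exact absurd (lt_trans hab (Fin.castSucc_lt_last b)) (lt_irrefl _)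
    | cast a =>
      rw [Fin.snoc_castSucc, Fin.snoc_castSucc]
      exact hf (by exact_mod_cast hab)

lemma rank_submatrix_le' {F : Type} [Field F] {m n s : ℕ} (A : Matrix (Fin m) (Fin n) F)
    (f : Fin s → Fin m) (g : Fin s → Fin n) : (A.submatrix f g).rank ≤ A.rank := by
  have h1 : (Matrix.of fun i k => if k = f i then (1:F) else 0) * A = A.submatrix f id := by
    ext i j
    rw [Matrix.mul_apply]
    simp [Finset.sum_ite_eq']
  have h2 : A.submatrix f id * (Matrix.of fun k j => if k = g j then (1:F) else 0)
      = A.submatrix f g := by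
    ext i j
    rw [Matrix.mul_apply]
    simp [Finset.sum_ite_eq]
  calc (A.submatrix f g).rank ≤ (A.submatrix f id).rank := by
        rw [← h2]; exact Matrix.rank_mul_le_left _ _
    _ ≤ A.rank := by
        rw [← h1]
        exact Matrix.rank_mul_le_right _ _

lemma submatrix_elim {F α β l l' o o' : Type*} (A : Matrix α β F)
    (f₁ : l → α) (f₂ : l' → α) (g₁ : o → β) (g₂ : o' → β) :
    A.submatrix (Sum.elim f₁ f₂) (Sum.elim g₁ g₂)
      = fromBlocks (A.submatrix f₁ g₁) (A.submatrix f₁ g₂)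
          (A.submatrix f₂ g₁) (A.submatrix f₂ g₂) := by
  ext i j
  cases i <;> cases j <;> rfl

lemma dodgson {F : Type} [Field F] {k : ℕ} (M : Matrix (Fin k ⊕ Fin 2) (Fin k ⊕ Fin 2) F)
    (hP : (M.submatrix Sum.inl Sum.inl).det ≠ 0) :
    M.det * (M.submatrix Sum.inl Sum.inl).det =
      (M.submatrix (Sum.elim Sum.inl fun _ : Fin 1 => Sum.inr 0)
        (Sum.elim Sum.inl fun _ : Fin 1 => Sum.inr 0)).det *
      (M.submatrix (Sum.elim Sum.inl fun _ : Fin 1 => Sum.inr 1)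
        (Sum.elim Sum.inl fun _ : Fin 1 => Sum.inr 1)).det -
      (M.submatrix (Sum.elim Sum.inl fun _ : Fin 1 => Sum.inr 1)
        (Sum.elim Sum.inl fun _ : Fin 1 => Sum.inr 0)).det *
      (M.submatrix (Sum.elim Sum.inl fun _ : Fin 1 => Sum.inr 0)
        (Sum.elim Sum.inl fun _ : Fin 1 => Sum.inr 1)).det := by
  set P := M.submatrix Sum.inl Sum.inl with hPdef
  set B := M.submatrix Sum.inl Sum.inr with hBdef
  set C := M.submatrix Sum.inr Sum.inl with hCdef
  set D := M.submatrix Sum.inr Sum.inr with hDdef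
  have : Invertible P := Matrix.invertibleOfIsUnitDet P (isUnit_iff_ne_zero.mpr hP)
  set S := D - C * ⅟P * B with hSdef
  have hM : M = fromBlocks P B C D := by ext i j; cases i <;> cases j <;> rfl
  have hdetM : M.det = P.det * S.det := by rw [hM, det_fromBlocks₁₁]
  have hN : ∀ a b : Fin 2,
      (M.submatrix (Sum.elim Sum.inl fun _ : Fin 1 => Sum.inr a)
        (Sum.elim Sum.inl fun _ : Fin 1 => Sum.inr b)).det = P.det * S a b := by
    intro a b
    have h1 : M.submatrix (Sum.elim Sum.inl fun _ : Fin 1 => Sum.inr a)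
        (Sum.elim Sum.inl fun _ : Fin 1 => Sum.inr b)
        = fromBlocks P (B.submatrix id fun _ : Fin 1 => b)
            (C.submatrix (fun _ : Fin 1 => a) id)
            (Matrix.of fun _ _ => D a b) := by
      ext i j; cases i <;> cases j <;> rfl
    rw [h1, det_fromBlocks₁₁]
    congr 1
    rw [Matrix.det_unique]
    simp only [hSdef, Matrix.sub_apply, Matrix.of_apply]
    congr 1
  rw [hdetM, hN 0 0, hN 1 1, hN 1 0, hN 0 1, Matrix.det_fin_two]
  ring

lemma comp_snoc_sum {α : Type*} {s : ℕ} (f : Fin s → α) (x : α) :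
    (Fin.snoc f x) ∘ finSumFinEquiv = Sum.elim f (fun _ : Fin 1 => x) := by
  funext z
  rcases z with z | z
  · have : Fin.castAdd 1 z = z.castSucc := rfl
    simp [this, Fin.snoc_castSucc]
  · have hz : z = 0 := Subsingleton.elim _ _
    subst hz
    have : (finSumFinEquiv (Sum.inr 0) : Fin (s + 1)) = Fin.last s := by
      ext; simp
    simp [this]

lemma det_snoc_eq_sum {F : Type} [Field F] {m n s : ℕ} (A : Matrix (Fin m) (Fin n) F)
    (f : Fin s → Fin m) (x : Fin m) (g : Fin s → Fin n) (y : Fin n) :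
    (A.submatrix (Fin.snoc f x) (Fin.snoc g y)).det
      = (A.submatrix (Sum.elim f fun _ : Fin 1 => x)
          (Sum.elim g fun _ : Fin 1 => y)).det := by
  rw [← Matrix.det_submatrix_equiv_self finSumFinEquiv
    (A.submatrix (Fin.snoc f x) (Fin.snoc g y)), submatrix_submatrix,
    comp_snoc_sum, comp_snoc_sum]

lemma comp_snoc2_sum {α : Type*} {s : ℕ} (f : Fin s → α) (x x' : α) :
    (Fin.snoc (Fin.snoc f x) x') ∘ (finSumFinEquiv : Fin s ⊕ Fin 2 ≃ Fin (s + 2))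
      = Sum.elim f ![x, x'] := by
  funext z
  rcases z with z | z
  · have : (finSumFinEquiv (Sum.inl z) : Fin (s + 2)) = (z.castSucc).castSucc := by
      ext; simp
    simp [Function.comp, this, Fin.snoc_castSucc]
  · fin_cases z
    · have : (finSumFinEquiv (Sum.inr 0) : Fin (s + 2)) = (Fin.last s).castSucc := by
        ext; simp
      simp [Function.comp, this, Fin.snoc_castSucc, Fin.snoc_last]
    · have : (finSumFinEquiv (Sum.inr 1) : Fin (s + 2)) = Fin.last (s + 1) := by
        ext; simp
      simp [Function.comp, this, Fin.snoc_last]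

lemma det_snoc2_eq_sum {F : Type} [Field F] {m n s : ℕ} (A : Matrix (Fin m) (Fin n) F)
    (f : Fin s → Fin m) (x x' : Fin m) (g : Fin s → Fin n) (y y' : Fin n) :
    (A.submatrix (Fin.snoc (Fin.snoc f x) x') (Fin.snoc (Fin.snoc g y) y')).det
      = (A.submatrix (Sum.elim f ![x, x']) (Sum.elim g ![y, y'])).det := by
  rw [← Matrix.det_submatrix_equiv_self (finSumFinEquiv : Fin s ⊕ Fin 2 ≃ Fin (s + 2))
    (A.submatrix (Fin.snoc (Fin.snoc f x) x') (Fin.snoc (Fin.snoc g y) y')),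
    submatrix_submatrix, comp_snoc2_sum, comp_snoc2_sum]

section helpers

variable {F : Type} [Field F] {m n t : ℕ}

-- minors
def Ddet (A : Matrix (Fin m) (Fin n) F) (r : Fin t → Fin m) (c : Fin t → Fin n)
    (k : ℕ) (hk : k ≤ t) : F :=
  (A.submatrix (fun s : Fin k => r (Fin.castLE hk s))
    (fun s : Fin k => c (Fin.castLE hk s))).det

def Pdet (A : Matrix (Fin m) (Fin n) F) (r : Fin t → Fin m) (c : Fin t → Fin n)
    (i : Fin m) (j : Fin n) (k : ℕ) (hk : k ≤ t) : F :=
  (A.submatrix (Fin.snoc (fun s : Fin k => r (Fin.castLE hk s)) i)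
    (Fin.snoc (fun s : Fin k => c (Fin.castLE hk s)) j)).det

def NLdet (A : Matrix (Fin m) (Fin n) F) (r : Fin t → Fin m) (c : Fin t → Fin n)
    (i : Fin m) (k : ℕ) (hk : k + 1 ≤ t) : F :=
  (A.submatrix (Fin.snoc (fun s : Fin k => r (Fin.castLE (Nat.le_of_succ_le hk) s)) i)
    (fun s : Fin (k + 1) => c (Fin.castLE hk s))).det

def NUdet (A : Matrix (Fin m) (Fin n) F) (r : Fin t → Fin m) (c : Fin t → Fin n)
    (j : Fin n) (k : ℕ) (hk : k + 1 ≤ t) : F :=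
  (A.submatrix (fun s : Fin (k + 1) => r (Fin.castLE hk s))
    (Fin.snoc (fun s : Fin k => c (Fin.castLE (Nat.le_of_succ_le hk) s)) j)).det

end helpers

section step
variable {F : Type} [Field F] {m n t : ℕ}
  (A : Matrix (Fin m) (Fin n) F) (r : Fin t → Fin m) (c : Fin t → Fin n)

lemma elim_comp_aux {α : Type*} {k : ℕ} (f : Fin k → α) (v : Fin 2 → α) (a : Fin 2) :
    (Sum.elim f v) ∘ (Sum.elim Sum.inl fun _ : Fin 1 => Sum.inr a)
      = Sum.elim f (fun _ : Fin 1 => v a) := by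
  funext z; rcases z with z | z <;> rfl

lemma step_dodgson (hA : InM A r c) (i : Fin m) (j : Fin n) {k : ℕ} (hk : k + 1 ≤ t) :
    Pdet A r c i j (k+1) hk * Ddet A r c k (Nat.le_of_succ_le hk)
      = Pdet A r c i j k (Nat.le_of_succ_le hk) * Ddet A r c (k+1) hk
        - NLdet A r c i k hk * NUdet A r c j k hk := by
  have hk' : k ≤ t := Nat.le_of_succ_le hk
  have hkt : k < t := hk
  set f : Fin k → Fin m := fun s => r (Fin.castLE hk' s) with hf
  set g : Fin k → Fin n := fun s => c (Fin.castLE hk' s) with hg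
  set M : Matrix (Fin k ⊕ Fin 2) (Fin k ⊕ Fin 2) F :=
    A.submatrix (Sum.elim f ![r ⟨k, hkt⟩, i]) (Sum.elim g ![c ⟨k, hkt⟩, j]) with hM
  have hMsub : ∀ a b : Fin 2,
      (M.submatrix (Sum.elim Sum.inl fun _ : Fin 1 => Sum.inr a)
        (Sum.elim Sum.inl fun _ : Fin 1 => Sum.inr b)).det
      = (A.submatrix (Fin.snoc f (![r ⟨k, hkt⟩, i] a))
          (Fin.snoc g (![c ⟨k, hkt⟩, j] b))).det := by
    intro a b
    rw [hM, submatrix_submatrix, elim_comp_aux, elim_comp_aux, det_snoc_eq_sum]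
  have hP : (M.submatrix Sum.inl Sum.inl).det ≠ 0 := by
    rw [hM, submatrix_submatrix, Sum.elim_comp_inl, Sum.elim_comp_inl]
    exact hA.2.1 k hk'
  have hd := dodgson M hP
  -- identify the pieces
  have e1 : (M.submatrix Sum.inl Sum.inl).det = Ddet A r c k hk' := by
    rw [hM, submatrix_submatrix, Sum.elim_comp_inl, Sum.elim_comp_inl]; rfl
  have hsnocr : Fin.snoc f (r ⟨k, hkt⟩) = fun s : Fin (k+1) => r (Fin.castLE hk s) := by
    have := snoc_full r ⟨k, hkt⟩
    convert this using 2
  have hsnocc : Fin.snoc g (c ⟨k, hkt⟩) = fun s : Fin (k+1) => c (Fin.castLE hk s) := by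
    have := snoc_full c ⟨k, hkt⟩
    convert this using 2
  have e2 : (M.submatrix (Sum.elim Sum.inl fun _ : Fin 1 => Sum.inr 0)
      (Sum.elim Sum.inl fun _ : Fin 1 => Sum.inr 0)).det = Ddet A r c (k+1) hk := by
    rw [hMsub 0 0]
    show (A.submatrix (Fin.snoc f (r ⟨k, hkt⟩)) (Fin.snoc g (c ⟨k, hkt⟩))).det = _
    rw [hsnocr, hsnocc]; rfl
  have e3 : (M.submatrix (Sum.elim Sum.inl fun _ : Fin 1 => Sum.inr 1)
      (Sum.elim Sum.inl fun _ : Fin 1 => Sum.inr 1)).det = Pdet A r c i j k hk' := by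
    rw [hMsub 1 1]; rfl
  have e4 : (M.submatrix (Sum.elim Sum.inl fun _ : Fin 1 => Sum.inr 1)
      (Sum.elim Sum.inl fun _ : Fin 1 => Sum.inr 0)).det = NLdet A r c i k hk := by
    rw [hMsub 1 0]
    show (A.submatrix (Fin.snoc f i) (Fin.snoc g (c ⟨k, hkt⟩))).det = _
    rw [hsnocc]; rfl
  have e5 : (M.submatrix (Sum.elim Sum.inl fun _ : Fin 1 => Sum.inr 0)
      (Sum.elim Sum.inl fun _ : Fin 1 => Sum.inr 1)).det = NUdet A r c j k hk := by
    rw [hMsub 0 1]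
    show (A.submatrix (Fin.snoc f (r ⟨k, hkt⟩)) (Fin.snoc g j)).det = _
    rw [hsnocr]; rfl
  have e6 : M.det = Pdet A r c i j (k+1) hk := by
    show M.det = (A.submatrix (Fin.snoc (fun s : Fin (k+1) => r (Fin.castLE hk s)) i)
      (Fin.snoc (fun s : Fin (k+1) => c (Fin.castLE hk s)) j)).det
    rw [← hsnocr, ← hsnocc, det_snoc2_eq_sum]
  rw [e1, e2, e3, e4, e5, e6] at hd
  rw [hd]
  ring

end step

lemma tele_alg {F : Type} [Field F] (aij P D P' D' NL NU : F) (hD : D ≠ 0) (hD' : D' ≠ 0)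
    (hstep : P' * D = P * D' - NL * NU) :
    (aij - P / D) + (NL / D') * (NU / D) = aij - P' / D' := by
  have hNN : NL * NU = P * D' - P' * D := by linear_combination hstep
  have h1 : P / D - P' / D' = (P * D' - P' * D) / (D * D') := by
    field_simp
  have h2 : (NL / D') * (NU / D) = (NL * NU) / (D * D') := by
    rw [div_mul_div_comm]
    ring_nf
  rw [h2, hNN, ← h1]
  ring

theorem explicit_LU {F : Type} [Field F] {m n t : ℕ}
    (A : Matrix (Fin m) (Fin n) F) (r : Fin t → Fin m) (c : Fin t → Fin n)
    (hr : StrictMono r) (hc : StrictMono c) (hA : InM A r c) :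
    InLstar (expL A r c) r ∧ InU (expU A r c) c ∧ A = expL A r c * expU A r c := by
  classical
  obtain ⟨hrank, hD, hV⟩ := hA
  refine ⟨?_, ?_, ?_⟩
  · intro jj
    constructor
    · show (if r jj ≤ r jj then _ / _ else 0) = 1
      rw [if_pos le_rfl, snoc_full r jj]
      exact div_self (hD _ jj.isLt)
    · intro i hi
      exact if_neg (not_le.mpr hi)
  · intro ii
    constructor
    · show (if c ii ≤ c ii then _ / _ else 0) ≠ 0
      rw [if_pos le_rfl, snoc_full c ii]
      exact div_ne_zero (hD _ ii.isLt) (hD _ ii.isLt.le)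
    · intro jj hj
      exact if_neg (not_le.mpr hj)
  · ext i j
    rw [Matrix.mul_apply]
    set term : ℕ → F := fun s =>
      if h : s < t then expL A r c i ⟨s, h⟩ * expU A r c ⟨s, h⟩ j else 0 with hterm
    have hex : ∃ k, (fun k => k = t ∨
        ∃ h : k < t, ¬(r ⟨k, h⟩ ≤ i ∧ c ⟨k, h⟩ ≤ j)) k := ⟨t, Or.inl rfl⟩
    set K := Nat.find hex with hK
    have hKle : K ≤ t := Nat.find_min' hex (Or.inl rfl)
    have hgood : ∀ k (hkt : k < t), k < K → r ⟨k, hkt⟩ ≤ i ∧ c ⟨k, hkt⟩ ≤ j := by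
      intro k hkt hkK
      have hnq := Nat.find_min hex hkK
      push_neg at hnq
      exact hnq.2 hkt
    -- telescoping
    have tele : ∀ k (hk : k ≤ K),
        (∑ s ∈ Finset.range k, term s)
          = A i j - Pdet A r c i j k (hk.trans hKle) / Ddet A r c k (hk.trans hKle) := by
      intro k
      induction k with
      | zero =>
        intro _
        have hP0 : Pdet A r c i j 0 (Nat.zero_le t) = A i j := by
          rw [Pdet, Matrix.det_fin_one]
          rfl
        have hD0 : Ddet A r c 0 (Nat.zero_le t) = 1 := Matrix.det_fin_zero
        simp [hP0, hD0]
      | succ k ih =>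
        intro hk1
        have hkK : k < K := hk1
        have hkt : k < t := lt_of_lt_of_le hkK hKle
        have hk1t : k + 1 ≤ t := hkt
        obtain ⟨hri, hcj⟩ := hgood k hkt hkK
        rw [Finset.sum_range_succ, ih (Nat.le_of_succ_le hk1), hterm]
        simp only [dif_pos hkt]
        have hL : expL A r c i ⟨k, hkt⟩ = NLdet A r c i k hk1t / Ddet A r c (k+1) hk1t := by
          show (if r ⟨k, hkt⟩ ≤ i then _ else 0) = _
          rw [if_pos hri]
          rfl
        have hU : expU A r c ⟨k, hkt⟩ j = NUdet A r c j k hk1t / Ddet A r c k hkt.le := by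
          show (if c ⟨k, hkt⟩ ≤ j then _ else 0) = _
          rw [if_pos hcj]
          rfl
        rw [hL, hU]
        have hstep := step_dodgson A r c ⟨hrank, hD, hV⟩ i j hk1t
        have hDk : Ddet A r c k (Nat.le_of_succ_le hk1t) ≠ 0 := hD _ _
        have hDk1 : Ddet A r c (k+1) hk1t ≠ 0 := hD _ _
        exact tele_alg _ _ _ _ _ _ _ hDk hDk1 hstep
    have hPK : Pdet A r c i j K hKle = 0 := by
      rcases eq_or_lt_of_le hKle with heq | hKt
      · -- K = t : rank argument
        by_contra hne
        set B := A.submatrix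
          (Fin.snoc (fun s : Fin K => r (Fin.castLE hKle s)) i)
          (Fin.snoc (fun s : Fin K => c (Fin.castLE hKle s)) j) with hB
        have hBunit : IsUnit B := (Matrix.isUnit_iff_isUnit_det B).mpr
          (isUnit_iff_ne_zero.mpr hne)
        have hBrank := Matrix.rank_of_isUnit B hBunit
        have hle := rank_submatrix_le' A
          (Fin.snoc (fun s : Fin K => r (Fin.castLE hKle s)) i)
          (Fin.snoc (fun s : Fin K => c (Fin.castLE hKle s)) j)
        rw [← hB, hBrank, hrank, Fintype.card_fin] at hle
        omega
      · -- K < t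
        have hQK := Nat.find_spec hex
        rcases hQK with heq | ⟨hKt', hbad⟩
        · omega
        by_cases hdupr : ∃ s : Fin K, i = r (Fin.castLE hKle s)
        · obtain ⟨s, hs⟩ := hdupr
          refine Matrix.det_zero_of_row_eq (M := _) (i := Fin.castSucc s)
            (j := Fin.last K) (Fin.castSucc_lt_last s).ne ?_
          funext y
          simp [Fin.snoc_castSucc, Fin.snoc_last, ← hs]
        by_cases hdupc : ∃ s : Fin K, j = c (Fin.castLE hKle s)
        · obtain ⟨s, hs⟩ := hdupc
          refine Matrix.det_zero_of_column_eq (M := _) (i := Fin.castSucc s)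
            (j := Fin.last K) (Fin.castSucc_lt_last s).ne ?_
          intro y
          simp [Fin.snoc_castSucc, Fin.snoc_last, ← hs]
        have hfmono : StrictMono (Fin.snoc (fun s : Fin K => r (Fin.castLE hKle s)) i) := by
          refine strictMono_snoc _ _ (hr.comp (Fin.strictMono_castLE hKle)) ?_
          intro s
          refine lt_of_le_of_ne ?_ (fun h => hdupr ⟨s, h.symm⟩)
          exact (hgood s.val (lt_of_lt_of_le s.isLt hKle) s.isLt).1
        have hgmono : StrictMono (Fin.snoc (fun s : Fin K => c (Fin.castLE hKle s)) j) := by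
          refine strictMono_snoc _ _ (hc.comp (Fin.strictMono_castLE hKle)) ?_
          intro s
          refine lt_of_le_of_ne ?_ (fun h => hdupc ⟨s, h.symm⟩)
          exact (hgood s.val (lt_of_lt_of_le s.isLt hKle) s.isLt).2
        refine hV (K + 1) hKt _ _ hfmono hgmono ?_
        have hcast : Fin.castLE (show K + 1 ≤ t from hKt) (Fin.last K) = ⟨K, hKt'⟩ := by
          ext
          simp
        rcases not_and_or.mp hbad with h | h
        · left
          intro hall
          have := hall (Fin.last K)
          rw [hcast, Fin.snoc_last] at this
          exact h this
        · right
          intro hall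
          have := hall (Fin.last K)
          rw [hcast, Fin.snoc_last] at this
          exact h this
    have hsum1 : (∑ k : Fin t, expL A r c i k * expU A r c k j)
        = ∑ s ∈ Finset.range t, term s := by
      rw [← Fin.sum_univ_eq_sum_range]
      refine Finset.sum_congr rfl fun k _ => ?_
      rw [hterm]
      simp only [dif_pos k.isLt]
    have hsplit : (∑ s ∈ Finset.range t, term s)
        = (∑ s ∈ Finset.range K, term s) + ∑ s ∈ Finset.Ico K t, term s := by
      rw [Finset.range_eq_Ico, Finset.range_eq_Ico]
      exact (Finset.sum_Ico_consecutive term (Nat.zero_le K) hKle).symm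
    have htail : ∀ s ∈ Finset.Ico K t, term s = 0 := by
      intro s hs
      rw [Finset.mem_Ico] at hs
      have hst : s < t := hs.2
      have hKt : K < t := lt_of_le_of_lt hs.1 hst
      have hQK := Nat.find_spec hex
      rcases hQK with heq | ⟨hKt', hbad⟩
      · omega
      have hle : (⟨K, hKt'⟩ : Fin t) ≤ ⟨s, hst⟩ := hs.1
      rw [hterm]
      simp only [dif_pos hst]
      rcases not_and_or.mp hbad with h | h
      · have hnr : ¬ r ⟨s, hst⟩ ≤ i := fun hh => h (le_trans (hr.monotone hle) hh)
        have : expL A r c i ⟨s, hst⟩ = 0 := if_neg hnr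
        rw [this, zero_mul]
      · have hnc : ¬ c ⟨s, hst⟩ ≤ j := fun hh => h (le_trans (hc.monotone hle) hh)
        have : expU A r c ⟨s, hst⟩ j = 0 := if_neg hnc
        rw [this, mul_zero]
    rw [hsum1, hsplit, Finset.sum_eq_zero htail, add_zero, tele K le_rfl, hPK,
      zero_div, sub_zero]
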